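/- Let G be a simple graph, let v be a vertex of maximum degree, and let u be any other vertex not adjacent to v. If u has a neighbor w, then there exists a neighbor x of v with x ≠ u, x ≠ w, such that x is not adjacent to w; consequently the edge swap replacing edges (v,x) and (u,w) by (v,u) and (x,w) yields a simple graph with the same degree sequence containing the edge (v,u). -/

import Mathlib

open SimpleGraph Set

theorem stmt_6 {V : Type*} [Fintype V] [DecidableEq V]
    (G : SimpleGraph V) [DecidableRel G.Adj]
    (v u w : V)
    (hmax : ∀ z : V, G.degree z ≤ G.degree v)
    (huv : u ≠ v) (hnadj : ¬ G.Adj v u) (huw : G.Adj u w) :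
    ∃ x : V, G.Adj v x ∧ x ≠ u ∧ x ≠ w ∧ ¬ G.Adj x w ∧
      ∃ G' : SimpleGraph V,
        G'.Adj v u ∧
        (∀ z : V, Nat.card (G'.neighborSet z) = G.degree z) ∧
        G'.edgeSet = (G.edgeSet \ {s(v, x), s(u, w)}) ∪ {s(v, u), s(x, w)} := by
  have hvw : v ≠ w := by rintro rfl; exact hnadj huw.symm
  have huw' : u ≠ w := huw.ne
  have hdef : ∀ z : V, G.degree z = (G.neighborFinset z).card := fun z => rfl
  -- find x
  obtain ⟨x, hvx, hxwne, hxw⟩ : ∃ x, G.Adj v x ∧ x ≠ w ∧ ¬ G.Adj x w := by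
    by_contra h
    push_neg at h
    have hsub : insert u (G.neighborFinset v \ {w}) ⊆ G.neighborFinset w \ {v} := by
      intro a ha
      simp only [Finset.mem_insert, Finset.mem_sdiff, Finset.mem_singleton,
        mem_neighborFinset] at ha ⊢
      rcases ha with rfl | ⟨hav, haw⟩
      · exact ⟨huw.symm, huv⟩
      · exact ⟨(h a hav haw).symm, fun h' => G.loopless.irrefl v (h' ▸ hav)⟩
    have hune : u ∉ G.neighborFinset v \ {w} := by
      simp only [Finset.mem_sdiff, mem_neighborFinset]
      tauto
    have hcard := Finset.card_le_card hsub
    rw [Finset.card_insert_of_notMem hune] at hcard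
    by_cases hw : w ∈ G.neighborFinset v
    · have hv : v ∈ G.neighborFinset w := by
        rw [mem_neighborFinset] at hw ⊢; exact hw.symm
      have h1 : (G.neighborFinset v \ {w}).card = G.degree v - 1 := by
        rw [Finset.card_sdiff_of_subset (Finset.singleton_subset_iff.mpr hw), Finset.card_singleton, hdef]
      have h2 : (G.neighborFinset w \ {v}).card = G.degree w - 1 := by
        rw [Finset.card_sdiff_of_subset (Finset.singleton_subset_iff.mpr hv), Finset.card_singleton, hdef]
      have hd1 : 1 ≤ G.degree v := by rw [hdef]; exact Finset.card_pos.mpr ⟨w, hw⟩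
      have := hmax w
      omega
    · have hv : v ∉ G.neighborFinset w := by
        rw [mem_neighborFinset] at hw ⊢; exact fun h' => hw h'.symm
      rw [(Finset.sdiff_singleton_eq_erase _ _).trans (Finset.erase_eq_of_notMem hw),
        (Finset.sdiff_singleton_eq_erase _ _).trans (Finset.erase_eq_of_notMem hv),
        ← hdef, ← hdef] at hcard
      have := hmax w
      omega
  have hxu : x ≠ u := by rintro rfl; exact hnadj hvx
  have hvx' : v ≠ x := hvx.ne
  refine ⟨x, hvx, hxu, hxwne, hxw, ?_⟩
  set E' : Set (Sym2 V) := (G.edgeSet \ {s(v, x), s(u, w)}) ∪ {s(v, u), s(x, w)} with hE'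
  have hE'nd : ∀ e ∈ E', ¬ e.IsDiag := by
    intro e he
    rcases he with ⟨he, -⟩ | he
    · exact G.not_isDiag_of_mem_edgeSet he
    · rcases he with rfl | rfl
      · simpa using (Ne.symm huv)
      · simpa using hxwne
  have hadj : ∀ a b : V, (SimpleGraph.fromEdgeSet E').Adj a b ↔
      ((G.Adj a b ∧ ¬ s(a,b) = s(v,x) ∧ ¬ s(a,b) = s(u,w)) ∨ s(a,b) = s(v,u) ∨ s(a,b) = s(x,w)) := by
    intro a b
    rw [fromEdgeSet_adj, hE']
    constructor
    · rintro ⟨he, hab⟩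
      rcases he with ⟨he, hne⟩ | he
      · rw [mem_edgeSet] at he
        simp only [Set.mem_insert_iff, Set.mem_singleton_iff] at hne
        exact Or.inl ⟨he, fun h => hne (Or.inl h), fun h => hne (Or.inr h)⟩
      · rcases he with h | h
        · exact Or.inr (Or.inl h)
        · exact Or.inr (Or.inr h)
    · rintro (⟨he, h1, h2⟩ | h | h)
      · exact ⟨Or.inl ⟨(mem_edgeSet G).mpr he, by simp [h1, h2]⟩, he.ne⟩
      · refine ⟨Or.inr (by simp [h]), ?_⟩
        rw [Sym2.eq_iff] at h
        rcases h with ⟨rfl, rfl⟩ | ⟨rfl, rfl⟩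
        · exact Ne.symm huv
        · exact huv
      · refine ⟨Or.inr (by simp [h]), ?_⟩
        rw [Sym2.eq_iff] at h
        rcases h with ⟨rfl, rfl⟩ | ⟨rfl, rfl⟩
        · exact hxwne
        · exact Ne.symm hxwne
  have hndeg : ∀ z : V, (G.neighborSet z).ncard = G.degree z := by
    intro z
    rw [Set.ncard_eq_toFinset_card']
    rfl
  have hswap : ∀ z a b : V, a ∈ G.neighborSet z → b ∉ G.neighborSet z →
      (insert b (G.neighborSet z \ {a})).ncard = G.degree z := by
    intro z a b ha hb
    rw [Set.ncard_insert_of_notMem (fun h => hb h.1),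
      Set.ncard_diff_singleton_add_one ha, hndeg]
  refine ⟨SimpleGraph.fromEdgeSet E', ?_, ?_, ?_⟩
  · rw [hadj]
    exact Or.inr (Or.inl rfl)
  · -- degrees
    intro z
    rw [Nat.card_coe_set_eq]
    by_cases hzv : z = v
    · rw [hzv]
      have hN : (SimpleGraph.fromEdgeSet E').neighborSet v = insert u (G.neighborSet v \ {x}) := by
        ext a
        simp only [mem_neighborSet, Set.mem_insert_iff, Set.mem_diff, Set.mem_singleton_iff]
        rw [hadj]
        simp only [Sym2.eq_iff]
        constructor
        · rintro (⟨h, h1, h2⟩ | (⟨-, rfl⟩ | ⟨h, -⟩) | (⟨h, -⟩ | ⟨h, -⟩))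
          · exact Or.inr ⟨h, fun hax => h1 (Or.inl ⟨trivial, hax⟩)⟩
          · exact Or.inl rfl
          · exact absurd h (Ne.symm huv)
          · exact absurd h hvx'
          · exact absurd h hvw
        · rintro (rfl | ⟨h, hax⟩)
          · exact Or.inr (Or.inl (Or.inl ⟨trivial, rfl⟩))
          · refine Or.inl ⟨h, ?_, ?_⟩
            · rintro (⟨-, h'⟩ | ⟨h', -⟩)
              · exact hax h'
              · exact hvx' h'
            · rintro (⟨h', -⟩ | ⟨h', -⟩)
              · exact Ne.symm huv h'
              · exact hvw h'
      rw [hN]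
      exact hswap v x u hvx hnadj
    · by_cases hzu : z = u
      · rw [hzu]
        have hN : (SimpleGraph.fromEdgeSet E').neighborSet u = insert v (G.neighborSet u \ {w}) := by
          ext a
          simp only [mem_neighborSet, Set.mem_insert_iff, Set.mem_diff, Set.mem_singleton_iff]
          rw [hadj]
          simp only [Sym2.eq_iff]
          constructor
          · rintro (⟨h, h1, h2⟩ | (⟨h, -⟩ | ⟨-, rfl⟩) | (⟨h, -⟩ | ⟨h, -⟩))
            · exact Or.inr ⟨h, fun haw => h2 (Or.inl ⟨trivial, haw⟩)⟩
            · exact absurd h huv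
            · exact Or.inl rfl
            · exact absurd h (Ne.symm hxu)
            · exact absurd h huw'
          · rintro (rfl | ⟨h, haw⟩)
            · exact Or.inr (Or.inl (Or.inr ⟨trivial, rfl⟩))
            · refine Or.inl ⟨h, ?_, ?_⟩
              · rintro (⟨h', -⟩ | ⟨h', -⟩)
                · exact huv h'
                · exact Ne.symm hxu h'
              · rintro (⟨-, h'⟩ | ⟨h', -⟩)
                · exact haw h'
                · exact huw' h'
        rw [hN]
        exact hswap u w v huw (fun h => hnadj h.symm)
      · by_cases hzw : z = w
        · rw [hzw]
          have hN : (SimpleGraph.fromEdgeSet E').neighborSet w = insert x (G.neighborSet w \ {u}) := by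
            ext a
            simp only [mem_neighborSet, Set.mem_insert_iff, Set.mem_diff, Set.mem_singleton_iff]
            rw [hadj]
            simp only [Sym2.eq_iff]
            constructor
            · rintro (⟨h, h1, h2⟩ | (⟨h, -⟩ | ⟨h, -⟩) | (⟨h, -⟩ | ⟨-, rfl⟩))
              · exact Or.inr ⟨h, fun hau => h2 (Or.inr ⟨trivial, hau⟩)⟩
              · exact absurd h (Ne.symm hvw)
              · exact absurd h (Ne.symm huw')
              · exact absurd h (Ne.symm hxwne)
              · exact Or.inl rfl
            · rintro (rfl | ⟨h, hau⟩)
              · exact Or.inr (Or.inr (Or.inr ⟨trivial, rfl⟩))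
              · refine Or.inl ⟨h, ?_, ?_⟩
                · rintro (⟨h', -⟩ | ⟨h', -⟩)
                  · exact Ne.symm hvw h'
                  · exact Ne.symm hxwne h'
                · rintro (⟨h', -⟩ | ⟨-, h'⟩)
                  · exact Ne.symm huw' h'
                  · exact hau h'
          rw [hN]
          exact hswap w u x huw.symm (fun h => hxw h.symm)
        · by_cases hzx : z = x
          · rw [hzx]
            have hN : (SimpleGraph.fromEdgeSet E').neighborSet x = insert w (G.neighborSet x \ {v}) := by
              ext a
              simp only [mem_neighborSet, Set.mem_insert_iff, Set.mem_diff, Set.mem_singleton_iff]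
              rw [hadj]
              simp only [Sym2.eq_iff]
              constructor
              · rintro (⟨h, h1, h2⟩ | (⟨h, -⟩ | ⟨h, -⟩) | (⟨-, rfl⟩ | ⟨h, -⟩))
                · exact Or.inr ⟨h, fun hav => h1 (Or.inr ⟨trivial, hav⟩)⟩
                · exact absurd h (Ne.symm hvx')
                · exact absurd h hxu
                · exact Or.inl rfl
                · exact absurd h hxwne
              · rintro (rfl | ⟨h, hav⟩)
                · exact Or.inr (Or.inr (Or.inl ⟨trivial, rfl⟩))
                · refine Or.inl ⟨h, ?_, ?_⟩
                  · rintro (⟨h', -⟩ | ⟨-, h'⟩)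
                    · exact Ne.symm hvx' h'
                    · exact hav h'
                  · rintro (⟨h', -⟩ | ⟨h', -⟩)
                    · exact hxu h'
                    · exact hxwne h'
            rw [hN]
            exact hswap x v w hvx.symm hxw
          · have hN : (SimpleGraph.fromEdgeSet E').neighborSet z = G.neighborSet z := by
              ext a
              simp only [mem_neighborSet]
              rw [hadj]
              simp only [Sym2.eq_iff]
              constructor
              · rintro (⟨h, -, -⟩ | (⟨h, -⟩ | ⟨h, -⟩) | (⟨h, -⟩ | ⟨h, -⟩))
                · exact h
                · exact absurd h hzv
                · exact absurd h hzu
                · exact absurd h hzx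
                · exact absurd h hzw
              · intro h
                refine Or.inl ⟨h, ?_, ?_⟩
                · rintro (⟨h', -⟩ | ⟨h', -⟩)
                  · exact hzv h'
                  · exact hzx h'
                · rintro (⟨h', -⟩ | ⟨h', -⟩)
                  · exact hzu h'
                  · exact hzw h'
            rw [hN, hndeg]
  · -- edgeSet
    rw [edgeSet_fromEdgeSet]
    ext e
    simp only [Set.mem_diff, Set.mem_setOf_eq]
    exact ⟨fun ⟨h, _⟩ => h, fun h => ⟨h, hE'nd e h⟩⟩
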